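/- Let σ ∈ (1/2, 1). Then for every ξ with |ξ| > 1, the even symmetrization g(ξ) = (p₁(ξ) + p₁(−ξ))/2 satisfies g(ξ) ≤ |ξ|^{2σ} − (2 − 2^{2σ−1}); that is, (1/2)·((|ξ|+1)^{2σ} + (|ξ|−1)^{2σ}) − 1 ≤ |ξ|^{2σ} − (2 − 2^{2σ−1}). -/

import Mathlib

open Real

/-- The symbol `p₁(ξ) = |ξ+1|^{2σ} − 1 − 2σξ`. -/
noncomputable def pOne (σ : ℝ) (ξ : ℝ) : ℝ := |ξ + 1| ^ (2*σ) - 1 - 2*σ*ξ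


open Real

/-- midpoint concavity of rpow for exponent in (0,1) -/
lemma rpow_midpoint (p : ℝ) (hp0 : 0 < p) (hp1 : p < 1) {a b : ℝ} (ha : 0 ≤ a) (hb : 0 ≤ b) :
    a ^ p + b ^ p ≤ 2 * ((a + b) / 2) ^ p := by
  have h := (Real.concaveOn_rpow hp0.le hp1.le).2 (Set.mem_Ici.mpr ha) (Set.mem_Ici.mpr hb)
    (by norm_num : (0:ℝ) ≤ 1/2) (by norm_num : (0:ℝ) ≤ 1/2) (by norm_num)
  simp only [smul_eq_mul] at h
  have : (1/2 : ℝ) * a + (1/2) * b = (a + b) / 2 := by ring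
  rw [this] at h
  linarith

lemma key_ineq (α : ℝ) (hα1 : 1 < α) (hα2 : α < 2) {r : ℝ} (hr : 1 < r) :
    (r + 1) ^ α + (r - 1) ^ α ≤ 2 * r ^ α + ((2:ℝ) ^ α - 2) := by
  set F : ℝ → ℝ := fun x => 2 * x ^ α - (x + 1) ^ α - (x - 1) ^ α with hF
  have hmono : MonotoneOn F (Set.Ici 1) := by
    apply monotoneOn_of_deriv_nonneg (convex_Ici 1)
    · apply ContinuousOn.sub
      apply ContinuousOn.sub
      · exact continuousOn_const.mul ((continuous_iff_continuousAt.mpr fun x =>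
          Real.continuousAt_rpow_const x α (Or.inr (by linarith))).continuousOn)
      · exact ((continuous_id.add continuous_const).continuousOn.rpow_const
          fun x _ => Or.inr (by linarith))
      · exact ((continuous_id.sub continuous_const).continuousOn.rpow_const
          fun x _ => Or.inr (by linarith))
    · intro x hx
      rw [interior_Ici] at hx
      have hx1 : (1:ℝ) < x := hx
      have h1 : HasDerivAt F (2 * (α * x ^ (α - 1)) - α * (x + 1) ^ (α - 1) * 1
          - α * (x - 1) ^ (α - 1) * 1) x := by
        have d0 : HasDerivAt (fun y : ℝ => y ^ α) (α * x ^ (α - 1)) x :=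
          Real.hasDerivAt_rpow_const (Or.inl (by linarith))
        have d1 : HasDerivAt (fun y : ℝ => (y + 1) ^ α) (α * (x + 1) ^ (α - 1) * 1) x :=
          (Real.hasDerivAt_rpow_const (p := α) (x := x + 1) (Or.inl (by linarith))).comp (h₂ := fun y : ℝ => y ^ α) x
            ((hasDerivAt_id x).add_const 1)
        have d2 : HasDerivAt (fun y : ℝ => (y - 1) ^ α) (α * (x - 1) ^ (α - 1) * 1) x :=
          (Real.hasDerivAt_rpow_const (p := α) (x := x - 1) (Or.inl (by linarith))).comp (h₂ := fun y : ℝ => y ^ α) x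
            ((hasDerivAt_id x).sub_const 1)
        exact ((d0.const_mul 2).sub d1).sub d2
      exact h1.differentiableAt.differentiableWithinAt
    · intro x hx
      rw [interior_Ici] at hx
      have hx1 : (1:ℝ) < x := hx
      have d0 : HasDerivAt (fun y : ℝ => y ^ α) (α * x ^ (α - 1)) x :=
        Real.hasDerivAt_rpow_const (Or.inl (by linarith))
      have d1 : HasDerivAt (fun y : ℝ => (y + 1) ^ α) (α * (x + 1) ^ (α - 1) * 1) x :=
        (Real.hasDerivAt_rpow_const (p := α) (x := x + 1) (Or.inl (by linarith))).comp (h₂ := fun y : ℝ => y ^ α) x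
          ((hasDerivAt_id x).add_const 1)
      have d2 : HasDerivAt (fun y : ℝ => (y - 1) ^ α) (α * (x - 1) ^ (α - 1) * 1) x :=
        (Real.hasDerivAt_rpow_const (p := α) (x := x - 1) (Or.inl (by linarith))).comp (h₂ := fun y : ℝ => y ^ α) x
          ((hasDerivAt_id x).sub_const 1)
      have hD : HasDerivAt F (2 * (α * x ^ (α - 1)) - α * (x + 1) ^ (α - 1) * 1
          - α * (x - 1) ^ (α - 1) * 1) x := ((d0.const_mul 2).sub d1).sub d2
      rw [hD.deriv]
      have hconc : (x + 1) ^ (α - 1) + (x - 1) ^ (α - 1) ≤ 2 * x ^ (α - 1) := by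
        have := rpow_midpoint (α - 1) (by linarith) (by linarith)
          (by linarith : (0:ℝ) ≤ x + 1) (by linarith : (0:ℝ) ≤ x - 1)
        have hmid : (x + 1 + (x - 1)) / 2 = x := by ring
        rwa [hmid] at this
      nlinarith [hconc, le_of_lt hα1]
  have h := hmono (Set.self_mem_Ici) (Set.mem_Ici.mpr hr.le) hr.le
  have hF1 : F 1 = 2 - 2 ^ α := by
    simp only [hF]
    norm_num [Real.one_rpow, Real.zero_rpow (by linarith : α ≠ 0)]
  rw [hF1] at h
  simp only [hF] at h
  linarith

/-- For `|ξ| > 1`, the even part `g(ξ) = (p₁(ξ) + p₁(−ξ))/2` satisfies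
`g(ξ) ≤ |ξ|^{2σ} − (2 − 2^{2σ−1})`; that is,
`(1/2)((|ξ|+1)^{2σ} + (|ξ|−1)^{2σ}) − 1 ≤ |ξ|^{2σ} − (2 − 2^{2σ−1})`. -/
theorem pOne_even_part_high (σ : ℝ) (hσ : σ ∈ Set.Ioo (1/2 : ℝ) 1) :
    ∀ ξ : ℝ, 1 < |ξ| →
      (pOne σ ξ + pOne σ (-ξ)) / 2 ≤ |ξ| ^ (2*σ) - (2 - (2 : ℝ) ^ (2*σ - 1)) ∧
      (1/2) * ((|ξ| + 1) ^ (2*σ) + (|ξ| - 1) ^ (2*σ)) - 1 ≤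
        |ξ| ^ (2*σ) - (2 - (2 : ℝ) ^ (2*σ - 1)) := by
  obtain ⟨hσ1, hσ2⟩ := hσ
  intro ξ hξ
  have hα1 : 1 < 2 * σ := by linarith
  have hα2 : 2 * σ < 2 := by linarith
  have hkey := key_ineq (2*σ) hα1 hα2 hξ
  have h2 : (2:ℝ) ^ (2*σ - 1) = 2 ^ (2*σ) / 2 := by
    rw [Real.rpow_sub (by norm_num), Real.rpow_one]
  have hmain : (1/2) * ((|ξ| + 1) ^ (2*σ) + (|ξ| - 1) ^ (2*σ)) - 1 ≤
      |ξ| ^ (2*σ) - (2 - (2 : ℝ) ^ (2*σ - 1)) := by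
    rw [h2]; linarith
  refine ⟨?_, hmain⟩
  have habs : |ξ + 1| ^ (2*σ) + |(-ξ) + 1| ^ (2*σ)
      = (|ξ| + 1) ^ (2*σ) + (|ξ| - 1) ^ (2*σ) := by
    rcases lt_or_ge 0 ξ with h | h
    · have hξ1 : 1 < ξ := by rwa [abs_of_pos h] at hξ
      rw [abs_of_pos h, abs_of_pos (by linarith : (0:ℝ) < ξ + 1),
        abs_of_nonpos (by linarith : -ξ + 1 ≤ 0)]
      ring_nf
    · have hξ1 : ξ < -1 := by rw [abs_of_nonpos h] at hξ; linarith
      rw [abs_of_nonpos h, abs_of_nonpos (by linarith : ξ + 1 ≤ 0),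
        abs_of_pos (by linarith : (0:ℝ) < -ξ + 1)]
      ring_nf
  have : (pOne σ ξ + pOne σ (-ξ)) / 2
      = (1/2) * ((|ξ| + 1) ^ (2*σ) + (|ξ| - 1) ^ (2*σ)) - 1 := by
    simp only [pOne]
    rw [show -ξ + 1 = (-ξ) + 1 from rfl] at habs
    have := habs
    ring_nf
    ring_nf at this
    linarith
  rw [this]
  exact hmain
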